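/- (ISS with respect to compact sets.) Consider the system z_{k+1} = f(z_k, v_k), where f : ℝ^n × ℝ^m → ℝ^n is locally Lipschitz and (v_k)_{k≥0} is a bounded input sequence. Let 𝒜 ⊂ ℝ^n be a nonempty compact set that is forward invariant for the unforced system z_{k+1} = f(z_k, 0). Suppose there exist a continuous function V : ℝ^n → ℝ_{≥0}, class-𝒦_∞ functions α₁, α₂, α₃, and a class-𝒦 function σ such that for all z ∈ ℝ^n and v ∈ ℝ^m: (i) α₁(|z|_𝒜) ≤ V(z) ≤ α₂(|z|_𝒜), and (ii) V(f(z,v)) − V(z) ≤ −α₃(|z|_𝒜) + σ(‖v‖). Then there exist a class-𝒦𝓛 function β and a class-𝒦 function γ such that every solution satisfies |z_k|_𝒜 ≤ β(|z_{k₀}|_𝒜, k − k₀) + γ(sup_{t ≥ k₀} ‖v_t‖) for all 0 ≤ k₀ ≤ k and all initial conditions z_{k₀} ∈ ℝ^n. -/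

import Mathlib

open Filter Metric

/-- A class-𝒦 function: continuous on `[0,∞)`, strictly increasing on `[0,∞)`,
and vanishing at `0`. -/
def ClassK (γ : ℝ → ℝ) : Prop :=
  ContinuousOn γ (Set.Ici 0) ∧ StrictMonoOn γ (Set.Ici 0) ∧ γ 0 = 0

/-- A class-𝒦∞ function: class-𝒦 and unbounded. -/
def ClassKInf (γ : ℝ → ℝ) : Prop :=
  ClassK γ ∧ Tendsto γ atTop atTop

/-- A class-𝒦𝓛 function: continuous, strictly increasing in the first argument
with `β 0 s = 0`, decreasing in the second argument, and `β r s → 0` as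
`s → ∞`. -/
def ClassKL (β : ℝ → ℝ → ℝ) : Prop :=
  ContinuousOn (Function.uncurry β) (Set.Ici 0 ×ˢ Set.Ici 0) ∧
  (∀ s, 0 ≤ s → StrictMonoOn (fun r => β r s) (Set.Ici 0)) ∧
  (∀ s, 0 ≤ s → β 0 s = 0) ∧
  (∀ r, 0 ≤ r → AntitoneOn (fun s => β r s) (Set.Ici 0)) ∧
  (∀ r, 0 ≤ r → Tendsto (fun s => β r s) atTop (nhds 0))

lemma classK_nonneg {α : ℝ → ℝ} (h : ClassK α) {x : ℝ} (hx : 0 ≤ x) : 0 ≤ α x := by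
  rcases eq_or_lt_of_le hx with rfl | hx'
  · exact le_of_eq h.2.2.symm
  · rw [← h.2.2]; exact (h.2.1 (Set.mem_Ici.2 (le_refl 0)) (Set.mem_Ici.2 (le_of_lt hx')) hx').le

lemma classKInf_inverse {α : ℝ → ℝ} (h : ClassKInf α) :
    ∃ g : ℝ → ℝ, Continuous g ∧ StrictMonoOn g (Set.Ici 0) ∧ Monotone g ∧ g 0 = 0 ∧
      (∀ x, 0 ≤ g x) ∧ (∀ x, 0 ≤ x → g (α x) = x) ∧ (∀ y, 0 ≤ y → α (g y) = y) ∧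
      Tendsto g atTop atTop := by
  obtain ⟨⟨hc, hm, h0⟩, htop⟩ := h
  have hmap : ∀ x : Set.Ici (0:ℝ), 0 ≤ α x := fun x => classK_nonneg ⟨hc, hm, h0⟩ x.2
  set F : Set.Ici (0:ℝ) → Set.Ici (0:ℝ) := fun x => ⟨α x, hmap x⟩ with hF
  have hFmono : StrictMono F := fun a b hab => by
    simpa [F, ← Subtype.coe_lt_coe] using hm a.2 b.2 (Subtype.coe_lt_coe.2 hab)
  have hFsurj : Function.Surjective F := by
    rintro ⟨y, hy⟩
    obtain ⟨b, hby, hb0⟩ := ((tendsto_atTop.1 htop y).and (eventually_ge_atTop 0)).exists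
    have hyb : y ∈ Set.Icc (α 0) (α b) := ⟨by rw [h0]; exact hy, hby⟩
    obtain ⟨x, hx, hxy⟩ := intermediate_value_Icc hb0 (hc.mono (fun t ht => ht.1)) hyb
    exact ⟨⟨x, hx.1⟩, Subtype.ext hxy⟩
  set e : Set.Ici (0:ℝ) ≃o Set.Ici (0:ℝ) := StrictMono.orderIsoOfSurjective F hFmono hFsurj
    with he
  have heF : ∀ x : Set.Ici (0:ℝ), e x = F x := fun x => rfl
  set g : ℝ → ℝ := fun y => (e.symm ⟨max y 0, le_max_right y 0⟩ : ℝ) with hg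
  have hsymm : ∀ x : Set.Ici (0:ℝ), e.symm (F x) = x := by
    intro x; rw [← heF]; exact e.symm_apply_apply x
  have hgα : ∀ x, 0 ≤ x → g (α x) = x := by
    intro x hx
    have : (⟨max (α x) 0, le_max_right (α x) 0⟩ : Set.Ici (0:ℝ)) = F ⟨x, hx⟩ := by
      apply Subtype.ext
      simp [F, max_eq_left (hmap ⟨x, hx⟩)]
    simp only [g, this, hsymm]
  have hαg : ∀ y, 0 ≤ y → α (g y) = y := by
    intro y hy
    have h1 : F (e.symm ⟨max y 0, le_max_right y 0⟩) = ⟨max y 0, le_max_right y 0⟩ := by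
      rw [← heF]; exact e.apply_symm_apply _
    have := congrArg Subtype.val h1
    simpa [g, F, max_eq_left hy] using this
  have hgc : Continuous g := by
    have : Continuous (fun y : ℝ => (⟨max y 0, le_max_right y 0⟩ : Set.Ici (0:ℝ))) :=
      Continuous.subtype_mk (continuous_id.max continuous_const) _
    exact continuous_subtype_val.comp (e.symm.continuous.comp this)
  have hgmono : Monotone g := by
    intro a b hab
    exact Subtype.coe_le_coe.2 (e.symm.monotone (Subtype.mk_le_mk.2 (max_le_max hab le_rfl)))
  have hgsm : StrictMonoOn g (Set.Ici 0) := by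
    intro a ha b hb hab
    exact Subtype.coe_lt_coe.2 (e.symm.strictMono (Subtype.mk_lt_mk.2
      (by rw [max_eq_left ha, max_eq_left hb]; exact hab)))
  have hg0 : g 0 = 0 := by
    have : g 0 = g (α 0) := by rw [h0]
    rw [this, hgα 0 le_rfl]
  have hgnn : ∀ x, 0 ≤ g x := fun x => (e.symm ⟨max x 0, le_max_right x 0⟩).2
  refine ⟨g, hgc, hgsm, hgmono, hg0, hgnn, hgα, hαg, ?_⟩
  refine tendsto_atTop_atTop_of_monotone hgmono (fun b => ?_)
  refine ⟨α (max b 0), ?_⟩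
  rw [hgα _ (le_max_right b 0)]
  exact le_max_left b 0

/-- **ISS with respect to compact sets.**  For `z_{k+1} = f(z_k, v_k)` with `f`
locally Lipschitz, `𝒜` a nonempty compact set forward invariant for the
unforced system, and an ISS Lyapunov function `V`, there exist `β ∈ 𝒦𝓛` and
`γ ∈ 𝒦` such that every solution with bounded input satisfies
`|z_k|_𝒜 ≤ β(|z_{k₀}|_𝒜, k - k₀) + γ(sup_{t ≥ k₀} ‖v_t‖)`. -/
theorem iss_wrt_compact_sets {n m : ℕ}
    (f : EuclideanSpace ℝ (Fin n) → EuclideanSpace ℝ (Fin m) → EuclideanSpace ℝ (Fin n))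
    (hf : LocallyLipschitz (fun zv : EuclideanSpace ℝ (Fin n) × EuclideanSpace ℝ (Fin m) =>
      f zv.1 zv.2))
    (𝒜 : Set (EuclideanSpace ℝ (Fin n))) (h𝒜ne : 𝒜.Nonempty) (h𝒜cpt : IsCompact 𝒜)
    (hinv : ∀ z ∈ 𝒜, f z 0 ∈ 𝒜)
    (V : EuclideanSpace ℝ (Fin n) → ℝ)
    (hVcont : Continuous V) (hVnonneg : ∀ z, 0 ≤ V z)
    (α₁ α₂ α₃ σ : ℝ → ℝ)
    (hα₁ : ClassKInf α₁) (hα₂ : ClassKInf α₂) (hα₃ : ClassKInf α₃) (hσ : ClassK σ)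
    (hsandwich : ∀ z, α₁ (infDist z 𝒜) ≤ V z ∧ V z ≤ α₂ (infDist z 𝒜))
    (hdecrease : ∀ z v, V (f z v) - V z ≤ -α₃ (infDist z 𝒜) + σ ‖v‖) :
    ∃ β : ℝ → ℝ → ℝ, ∃ γ : ℝ → ℝ, ClassKL β ∧ ClassK γ ∧
      ∀ v : ℕ → EuclideanSpace ℝ (Fin m), (∃ c, ∀ k, ‖v k‖ ≤ c) →
      ∀ z : ℕ → EuclideanSpace ℝ (Fin n), (∀ k, z (k + 1) = f (z k) (v k)) →
      ∀ k₀ k : ℕ, k₀ ≤ k →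
        infDist (z k) 𝒜 ≤
          β (infDist (z k₀) 𝒜) ((k - k₀ : ℕ) : ℝ) + γ (⨆ t : ℕ, ‖v (k₀ + t)‖) := by
  obtain ⟨g₁, hg₁c, hg₁sm, hg₁mono, hg₁0, hg₁nn, hg₁α, hαg₁, hg₁top⟩ := classKInf_inverse hα₁
  obtain ⟨g₂, hg₂c, hg₂sm, hg₂mono, hg₂0, hg₂nn, hg₂α, hαg₂, hg₂top⟩ := classKInf_inverse hα₂
  -- the decay rate function ρ = min (α₃ ∘ α₂⁻¹) id
  set ρ : ℝ → ℝ := fun x => min (α₃ (g₂ x)) x with hρdef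
  have hρ0 : ρ 0 = 0 := by simp [ρ, hg₂0, hα₃.1.2.2]
  have hρmono : Monotone ρ := by
    intro a b hab
    exact min_le_min (hα₃.1.2.1.monotoneOn (hg₂nn a) (hg₂nn b) (hg₂mono hab)) hab
  have hρle : ∀ x, ρ x ≤ x := fun x => min_le_right _ _
  have hρKInf : ClassKInf ρ := by
    constructor
    · refine ⟨?_, ?_, hρ0⟩
      · have h1 : ContinuousOn (fun x : ℝ => α₃ (g₂ x)) (Set.Ici 0) :=
          hα₃.1.1.comp hg₂c.continuousOn (fun x _ => hg₂nn x)
        exact fun x a => (h1 x a).min (continuousOn_id x a)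
      · intro a ha b hb hab
        exact min_lt_min (hα₃.1.2.1 (hg₂nn a) (hg₂nn b) (hg₂sm ha hb hab)) hab
    · rw [Filter.tendsto_atTop]
      intro q
      have h1 := Filter.tendsto_atTop.1 (hα₃.2.comp hg₂top) q
      have h2 := eventually_ge_atTop q
      filter_upwards [h1, h2] with x hx1 hx2
      exact le_min hx1 hx2
  obtain ⟨gρ, hgρc, hgρsm, hgρmono, hgρ0, hgρnn, hgρρ, hρgρ, hgρtop⟩ := classKInf_inverse hρKInf
  have hα₂nn : ∀ x, 0 ≤ x → 0 ≤ α₂ x := fun x hx => classK_nonneg hα₂.1 hx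
  have hσnn : ∀ x, 0 ≤ x → 0 ≤ σ x := fun x hx => classK_nonneg hσ hx
  -- define β and γ
  set β : ℝ → ℝ → ℝ := fun r t => g₁ (2 * gρ (3 * α₂ r / (t + 1))) with hβdef
  set γ : ℝ → ℝ := fun t => g₁ (2 * (gρ (2 * σ t) + σ t)) with hγdef
  have hinnn : ∀ r t : ℝ, 0 ≤ r → 0 ≤ t → 0 ≤ 3 * α₂ r / (t + 1) := by
    intro r t hr ht
    have := hα₂nn r hr
    positivity
  refine ⟨β, γ, ⟨?_, ?_, ?_, ?_, ?_⟩, ⟨?_, ?_, ?_⟩, ?_⟩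
  · -- joint continuity of β
    have houter : Continuous (fun x : ℝ => g₁ (2 * gρ x)) :=
      hg₁c.comp (continuous_const.mul hgρc)
    have hinner : ContinuousOn (fun p : ℝ × ℝ => 3 * α₂ p.1 / (p.2 + 1))
        (Set.Ici 0 ×ˢ Set.Ici 0) := by
      apply ContinuousOn.div
      · exact continuousOn_const.mul (hα₂.1.1.comp continuous_fst.continuousOn
          (fun p hp => hp.1))
      · exact (continuous_snd.add continuous_const).continuousOn
      · intro p hp
        have : (0:ℝ) ≤ p.2 := hp.2
        positivity
    exact houter.comp_continuousOn hinner
  · -- strict monotonicity in r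
    intro t ht r₁ hr₁ r₂ hr₂ hr
    have h1 : 3 * α₂ r₁ / (t + 1) < 3 * α₂ r₂ / (t + 1) := by
      have := hα₂.1.2.1 hr₁ hr₂ hr
      have ht1 : (0:ℝ) < t + 1 := by linarith
      gcongr
    have h2 := hgρsm (hinnn r₁ t hr₁ ht) (hinnn r₂ t hr₂ ht) h1
    have h3 : (0:ℝ) ≤ 2 * gρ (3 * α₂ r₁ / (t + 1)) := by have := hgρnn (3 * α₂ r₁ / (t + 1)); linarith
    have h4 : (0:ℝ) ≤ 2 * gρ (3 * α₂ r₂ / (t + 1)) := by have := hgρnn (3 * α₂ r₂ / (t + 1)); linarith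
    exact hg₁sm h3 h4 (by linarith)
  · -- β 0 t = 0
    intro t ht
    simp [β, hα₂.1.2.2, hgρ0, hg₁0]
  · -- antitone in t
    intro r hr t₁ ht₁ t₂ ht₂ ht
    have h1 : 3 * α₂ r / (t₂ + 1) ≤ 3 * α₂ r / (t₁ + 1) := by
      have h2 := hα₂nn r hr
      have h3 : (0:ℝ) < t₁ + 1 := by
        have : (0:ℝ) ≤ t₁ := ht₁
        linarith
      gcongr
    exact hg₁mono (by have := hgρmono h1; linarith)
  · -- tendsto 0
    intro r hr
    have hinner : Tendsto (fun t : ℝ => 3 * α₂ r / (t + 1)) atTop (nhds 0) := by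
      have h1 : Tendsto (fun t : ℝ => (t + 1)⁻¹) atTop (nhds 0) :=
        tendsto_inv_atTop_zero.comp (tendsto_atTop_add_const_right atTop 1 tendsto_id)
      have := h1.const_mul (3 * α₂ r)
      simpa [div_eq_mul_inv] using this
    have houter : Continuous (fun x : ℝ => g₁ (2 * gρ x)) :=
      hg₁c.comp (continuous_const.mul hgρc)
    have := (houter.tendsto 0).comp hinner
    simpa [β, Function.comp_def, hgρ0, hg₁0] using this
  · -- γ continuous on Ici 0
    have houter : Continuous (fun x : ℝ => g₁ (2 * (gρ (2 * x) + x))) := by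
      apply hg₁c.comp
      exact continuous_const.mul ((hgρc.comp (continuous_const.mul continuous_id)).add
        continuous_id)
    exact houter.comp_continuousOn hσ.1
  · -- γ strict mono on Ici 0
    intro t₁ ht₁ t₂ ht₂ ht
    have h1 := hσ.2.1 ht₁ ht₂ ht
    have h2 := hσnn t₁ ht₁
    have h3 := hσnn t₂ ht₂
    have h4 := hgρsm (by linarith : (0:ℝ) ≤ 2 * σ t₁) (by linarith : (0:ℝ) ≤ 2 * σ t₂)
      (by linarith)
    have h5 := hgρnn (2 * σ t₁)
    have h6 := hgρnn (2 * σ t₂)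
    exact hg₁sm (Set.mem_Ici.2 (by linarith)) (Set.mem_Ici.2 (by linarith)) (by linarith)
  · -- γ 0 = 0
    simp [γ, hσ.2.2, hgρ0, hg₁0]
  -- the main trajectory bound
  intro v hv z hz k₀ k hk
  obtain ⟨cb, hcb⟩ := hv
  set w : ℝ := ⨆ t : ℕ, ‖v (k₀ + t)‖ with hwdef
  have hbdd : BddAbove (Set.range fun t : ℕ => ‖v (k₀ + t)‖) :=
    ⟨cb, by rintro _ ⟨t, rfl⟩; exact hcb _⟩
  have hw0 : 0 ≤ w := le_trans (norm_nonneg (v (k₀ + 0))) (le_ciSup hbdd 0)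
  have hwt : ∀ j, k₀ ≤ j → ‖v j‖ ≤ w := by
    intro j hj
    have := le_ciSup hbdd (j - k₀)
    rwa [Nat.add_sub_cancel' hj] at this
  set s : ℝ := σ w with hsdef
  have hs0 : 0 ≤ s := hσnn w hw0
  set b : ℝ := gρ (2 * s) with hbdef2
  have hb0 : 0 ≤ b := hgρnn _
  have hρb : ρ b = 2 * s := hρgρ _ (by linarith)
  set c : ℝ := b + s with hcdef
  have hc0 : 0 ≤ c := by linarith
  -- one step decrease
  have hstep : ∀ j, k₀ ≤ j → V (z (j + 1)) ≤ V (z j) - ρ (V (z j)) + s := by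
    intro j hj
    have h1 := hdecrease (z j) (v j)
    rw [← hz j] at h1
    have h2 : σ ‖v j‖ ≤ s :=
      hσ.2.1.monotoneOn (norm_nonneg (v j)) (Set.mem_Ici.2 hw0) (hwt j hj)
    have h3 : ρ (V (z j)) ≤ α₃ (infDist (z j) 𝒜) := by
      have h4 : g₂ (V (z j)) ≤ infDist (z j) 𝒜 := by
        calc g₂ (V (z j)) ≤ g₂ (α₂ (infDist (z j) 𝒜)) := hg₂mono (hsandwich (z j)).2
          _ = infDist (z j) 𝒜 := hg₂α _ infDist_nonneg
      calc ρ (V (z j)) ≤ α₃ (g₂ (V (z j))) := min_le_left _ _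
        _ ≤ α₃ (infDist (z j) 𝒜) :=
          hα₃.1.2.1.monotoneOn (hg₂nn _) (Set.mem_Ici.2 infDist_nonneg) h4
    linarith
  -- max (V (z ·)) c is nonincreasing from k₀ on
  have hM : ∀ i j : ℕ, k₀ ≤ i → i ≤ j → max (V (z j)) c ≤ max (V (z i)) c := by
    intro i j hi hij
    induction j, hij using Nat.le_induction with
    | base => exact le_rfl
    | succ j hij ih =>
      refine le_trans ?_ ih
      have hj : k₀ ≤ j := le_trans hi hij
      have h1 := hstep j hj
      by_cases hbW : b ≤ V (z j)
      · have h2 : 2 * s ≤ ρ (V (z j)) := by rw [← hρb]; exact hρmono hbW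
        exact max_le_max (by linarith) le_rfl
      · push_neg at hbW
        have h2 : 0 ≤ ρ (V (z j)) := by rw [← hρ0]; exact hρmono (hVnonneg (z j))
        have h3 : V (z (j + 1)) ≤ c := by rw [hcdef]; linarith
        exact le_trans (max_le h3 le_rfl) (le_max_right _ _)
  -- decay estimate
  have hdecay : ∀ ε, 0 ≤ ε → ((k - k₀ : ℕ) : ℝ) * ρ ε > 2 * V (z k₀) →
      V (z k) ≤ c + ε := by
    intro ε hε hbig
    by_contra hcon
    push_neg at hcon
    have hkey : ∀ j, k₀ ≤ j → j ≤ k → c + ε < V (z j) := by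
      intro j h1 h2
      have h3 := hM j k h1 h2
      have h4 : V (z k) ≤ max (V (z j)) c := le_trans (le_max_left _ _) h3
      rcases le_max_iff.1 h4 with h5 | h5
      · linarith
      · linarith
    have hdec : ∀ i : ℕ, k₀ + i ≤ k → V (z (k₀ + i)) ≤ V (z k₀) - i * (ρ ε / 2) := by
      intro i
      induction i with
      | zero => intro _; simp
      | succ i ih =>
        intro hik
        have hik' : k₀ + i ≤ k := by omega
        have h1 := hstep (k₀ + i) (by omega)
        have h2 := hkey (k₀ + i) (by omega) hik'
        have h3 : b ≤ V (z (k₀ + i)) := by rw [hcdef] at h2; linarith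
        have h4 : 2 * s ≤ ρ (V (z (k₀ + i))) := by rw [← hρb]; exact hρmono h3
        have h5 : ρ ε ≤ ρ (V (z (k₀ + i))) := hρmono (by linarith)
        have h6 := ih hik'
        have : z (k₀ + (i + 1)) = z (k₀ + i + 1) := by ring_nf
        rw [this]
        push_cast
        linarith
    have h7 := hdec (k - k₀) (by omega)
    rw [Nat.add_sub_cancel' hk] at h7
    have h8 := hVnonneg (z k)
    linarith
  -- trivial bound
  have htriv : V (z k) ≤ max (V (z k₀)) c :=
    le_trans (le_max_left _ _) (hM k₀ k le_rfl hk)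
  -- choose ε
  set d₀ : ℝ := infDist (z k₀) 𝒜 with hd₀def
  have hd₀ : 0 ≤ d₀ := infDist_nonneg
  set N : ℝ := ((k - k₀ : ℕ) : ℝ) with hNdef
  have hN0 : 0 ≤ N := Nat.cast_nonneg _
  have ha' : 0 ≤ α₂ d₀ := hα₂nn d₀ hd₀
  have hVa : V (z k₀) ≤ α₂ d₀ := (hsandwich (z k₀)).2
  set ε : ℝ := gρ (3 * α₂ d₀ / (N + 1)) with hεdef
  have hεnn : 0 ≤ ε := hgρnn _
  have hqnn : 0 ≤ 3 * α₂ d₀ / (N + 1) := hinnn d₀ N hd₀ hN0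
  have hVk : V (z k) ≤ c + ε := by
    rcases le_or_gt 3 (k - k₀) with h3 | h3
    · rcases eq_or_lt_of_le ha' with h0' | hpos
      · -- α₂ d₀ = 0, so V (z k₀) = 0
        have hV0 : V (z k₀) = 0 := le_antisymm (by linarith) (hVnonneg _)
        have := htriv
        rw [hV0] at this
        have : V (z k) ≤ c := le_trans this (max_le hc0 le_rfl)
        linarith
      · apply hdecay ε hεnn
        have hρε : ρ ε = 3 * α₂ d₀ / (N + 1) := hρgρ _ hqnn
        rw [hρε]
        have hN3 : (3:ℝ) ≤ N := by
          rw [hNdef]; exact_mod_cast h3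
        have hN1 : (0:ℝ) < N + 1 := by linarith
        rw [gt_iff_lt, mul_div_assoc', lt_div_iff₀ hN1]
        nlinarith
    · -- N ≤ 2 : use trivial bound, since α₂ d₀ ≤ ε
      have hN2 : N ≤ 2 := by
        rw [hNdef]
        have : k - k₀ ≤ 2 := by omega
        exact_mod_cast this
      have h1 : α₂ d₀ ≤ 3 * α₂ d₀ / (N + 1) := by
        rw [le_div_iff₀ (by linarith : (0:ℝ) < N + 1)]
        nlinarith
      have h2 : ρ (α₂ d₀) ≤ 3 * α₂ d₀ / (N + 1) := le_trans (hρle _) h1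
      have h3 : α₂ d₀ ≤ ε := by
        calc α₂ d₀ = gρ (ρ (α₂ d₀)) := (hgρρ _ ha').symm
          _ ≤ ε := hgρmono h2
      exact le_trans htriv (max_le (by linarith) (by linarith))
  -- conclude
  have hfin : infDist (z k) 𝒜 ≤ g₁ (c + ε) := by
    have h1 : α₁ (infDist (z k) 𝒜) ≤ V (z k) := (hsandwich (z k)).1
    calc infDist (z k) 𝒜 = g₁ (α₁ (infDist (z k) 𝒜)) := (hg₁α _ infDist_nonneg).symm
      _ ≤ g₁ (c + ε) := hg₁mono (by linarith)
  have hsplit : g₁ (c + ε) ≤ g₁ (2 * ε) + g₁ (2 * c) := by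
    rcases le_total ε c with h | h
    · have := hg₁mono (by linarith : c + ε ≤ 2 * c)
      have := hg₁nn (2 * ε)
      linarith
    · have := hg₁mono (by linarith : c + ε ≤ 2 * ε)
      have := hg₁nn (2 * c)
      linarith
  have hβeq : β d₀ N = g₁ (2 * ε) := rfl
  have hγeq : γ w = g₁ (2 * c) := rfl
  calc infDist (z k) 𝒜 ≤ g₁ (c + ε) := hfin
    _ ≤ g₁ (2 * ε) + g₁ (2 * c) := hsplit
    _ = β d₀ N + γ w := by rw [hβeq, hγeq]
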